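/- Let I be a Γ-order-ideal of a commutative refinement Γ-monoid T. Then T has a Γ-composition series if and only if both I and T/I have Γ-composition series. -/

import Mathlib

open Pointwise

namespace JH

variable {Γ : Type*} {T : Type*} [AddCommMonoid T]

/-- `x ρ_H y` iff `(x+H) ∩ (y+H) ≠ ∅`. -/
def rho (H : Set T) (x y : T) : Prop := ∃ h₁ ∈ H, ∃ h₂ ∈ H, x + h₁ = y + h₂

/-- The congruence on `T` induced by a submonoid `I`. -/
def subCon (I : AddSubmonoid T) : AddCon T where
  r := rho (I : Set T)
  iseqv := by
    constructor
    · exact fun x => ⟨0, I.zero_mem, 0, I.zero_mem, rfl⟩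
    · rintro x y ⟨h₁, m₁, h₂, m₂, e⟩; exact ⟨h₂, m₂, h₁, m₁, e.symm⟩
    · rintro x y z ⟨h₁, m₁, h₂, m₂, e₁⟩ ⟨k₁, n₁, k₂, n₂, e₂⟩
      refine ⟨h₁ + k₁, I.add_mem m₁ n₁, k₂ + h₂, I.add_mem n₂ m₂, ?_⟩
      calc x + (h₁ + k₁) = (x + h₁) + k₁ := (add_assoc _ _ _).symm
        _ = (y + h₂) + k₁ := by rw [e₁]
        _ = (y + k₁) + h₂ := add_right_comm _ _ _
        _ = (z + k₂) + h₂ := by rw [e₂]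
        _ = z + (k₂ + h₂) := add_assoc _ _ _
  add' := by
    rintro w x y z ⟨h₁, m₁, h₂, m₂, e₁⟩ ⟨k₁, n₁, k₂, n₂, e₂⟩
    refine ⟨h₁ + k₁, I.add_mem m₁ n₁, h₂ + k₂, I.add_mem m₂ n₂, ?_⟩
    calc w + y + (h₁ + k₁) = (w + h₁) + (y + k₁) := add_add_add_comm _ _ _ _
      _ = (x + h₂) + (z + k₂) := by rw [e₁, e₂]
      _ = x + z + (h₂ + k₂) := (add_add_add_comm _ _ _ _).symm

/-- The quotient monoid `T/I`. -/
abbrev QuotM (I : AddSubmonoid T) : Type _ := (subCon I).Quotient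

variable [CommGroup Γ] [DistribMulAction Γ T]

/-- A `Γ`-order-ideal of a `Γ`-monoid: `α•a + β•b ∈ I ↔ a ∈ I ∧ b ∈ I`. -/
def IsOrdIdeal (Γ : Type*) {T : Type*} [CommGroup Γ] [AddCommMonoid T]
    [DistribMulAction Γ T] (I : Set T) : Prop :=
  (0 : T) ∈ I ∧ ∀ (α β : Γ) (a b : T), α • a + β • b ∈ I ↔ a ∈ I ∧ b ∈ I

theorem IsOrdIdeal.add_mem {I : Set T} (h : IsOrdIdeal Γ I) {a b : T}
    (ha : a ∈ I) (hb : b ∈ I) : a + b ∈ I := by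
  have := (h.2 1 1 a b).mpr ⟨ha, hb⟩
  simpa using this

/-- A `Γ`-order-ideal as an additive submonoid. -/
def IsOrdIdeal.asSubmonoid {I : Set T} (h : IsOrdIdeal Γ I) : AddSubmonoid T where
  carrier := I
  zero_mem' := h.1
  add_mem' := fun ha hb => h.add_mem ha hb

theorem IsOrdIdeal.smul_mem {I : Set T} (h : IsOrdIdeal Γ I) (α : Γ) {x : T}
    (hx : x ∈ I) : α • x ∈ I := by
  have := (h.2 α 1 x 0).mpr ⟨hx, h.1⟩
  simpa using this

/-- The induced scalar action on the quotient. -/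
def quotSMulFun {I : Set T} (h : IsOrdIdeal Γ I) (α : Γ) :
    QuotM h.asSubmonoid → QuotM h.asSubmonoid :=
  Quotient.map' (fun x => α • x) (by
    rintro x y ⟨h₁, m₁, h₂, m₂, e⟩
    exact ⟨α • h₁, h.smul_mem α m₁, α • h₂, h.smul_mem α m₂, by
      rw [← smul_add, ← smul_add, e]⟩)

/-- The induced `Γ`-action on the quotient monoid `T/I`. -/
def quotAction {I : Set T} (h : IsOrdIdeal Γ I) :
    DistribMulAction Γ (QuotM h.asSubmonoid) where
  smul := quotSMulFun h
  one_smul q := by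
    refine Quotient.inductionOn' q (fun x => ?_)
    show Quotient.mk'' ((1 : Γ) • x) = Quotient.mk'' x
    rw [one_smul]
  mul_smul α β q := by
    refine Quotient.inductionOn' q (fun x => ?_)
    show Quotient.mk'' ((α * β) • x) = Quotient.mk'' (α • β • x)
    rw [mul_smul]
  smul_zero α := by
    show Quotient.mk'' (α • (0 : T)) = Quotient.mk'' (0 : T)
    rw [smul_zero]
  smul_add α q r := by
    refine Quotient.inductionOn₂' q r (fun x y => ?_)
    show Quotient.mk'' (α • (x + y)) = Quotient.mk'' (α • x + α • y)
    rw [smul_add]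

/-- The `Γ`-action on a `Γ`-order-ideal, viewed as a submonoid. -/
def subtypeAction {J : Set T} (hJ : IsOrdIdeal Γ J) :
    DistribMulAction Γ ↥hJ.asSubmonoid where
  smul α x := ⟨α • (x : T), hJ.smul_mem α x.2⟩
  one_smul x := Subtype.ext (one_smul Γ (x : T))
  mul_smul α β x := Subtype.ext (mul_smul α β (x : T))
  smul_zero α := Subtype.ext (smul_zero α)
  smul_add α x y := Subtype.ext (smul_add α (x : T) (y : T))

/-- The restriction of a set `I` to (the submonoid given by) an ideal `J`. -/
def restrictSet {J : Set T} (hJ : IsOrdIdeal Γ J) (I : Set T) :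
    Set ↥hJ.asSubmonoid := {x | (x : T) ∈ I}

theorem restrict_isOrdIdeal {I J : Set T} (hI : IsOrdIdeal Γ I) (hJ : IsOrdIdeal Γ J) :
    @IsOrdIdeal Γ ↥hJ.asSubmonoid _ _ (subtypeAction hJ) (restrictSet hJ I) := by
  refine ⟨hI.1, fun α β a b => ?_⟩
  exact hI.2 α β (a : T) (b : T)

/-- The quotient `Γ`-monoid `J/I` of two `Γ`-order-ideals. -/
abbrev QuotPair {I J : Set T} (hI : IsOrdIdeal Γ I) (hJ : IsOrdIdeal Γ J) : Type _ :=
  QuotM (@IsOrdIdeal.asSubmonoid Γ _ _ _ (subtypeAction hJ) _ (restrict_isOrdIdeal hI hJ))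

/-- The induced `Γ`-action on `J/I`. -/
def quotPairAction {I J : Set T} (hI : IsOrdIdeal Γ I) (hJ : IsOrdIdeal Γ J) :
    DistribMulAction Γ (QuotPair hI hJ) :=
  letI := subtypeAction hJ
  quotAction (restrict_isOrdIdeal hI hJ)

/-- A simple `Γ`-monoid: nontrivial with no `Γ`-order-ideals except `0` and itself. -/
def IsSimple (Γ : Type*) (M : Type*) [CommGroup Γ] [AddCommMonoid M]
    [DistribMulAction Γ M] : Prop :=
  (∃ x : M, x ≠ 0) ∧ ∀ I : Set M, IsOrdIdeal Γ I → I = {0} ∨ I = Set.univ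

/-- A refinement monoid. -/
def Refinement (T : Type*) [AddCommMonoid T] : Prop :=
  ∀ a b c d : T, a + b = c + d →
    ∃ e₁ e₂ e₃ e₄ : T, a = e₁ + e₂ ∧ b = e₃ + e₄ ∧ c = e₁ + e₃ ∧ d = e₂ + e₄

/-- `Γ`-equivariant monoid isomorphism. -/
def IsGammaIso (Γ : Type*) (M N : Type*) [CommGroup Γ] [AddCommMonoid M]
    [AddCommMonoid N] [DistribMulAction Γ M] [DistribMulAction Γ N] : Prop :=
  ∃ e : M ≃+ N, ∀ (α : Γ) (x : M), e (α • x) = α • (e x)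

/-- A `Γ`-composition series of a `Γ`-monoid. -/
structure CompSeries (Γ : Type*) (M : Type*) [CommGroup Γ] [AddCommMonoid M]
    [DistribMulAction Γ M] where
  n : ℕ
  I : ℕ → Set M
  ideal : ∀ i, i ≤ n → IsOrdIdeal Γ (I i)
  bot : I 0 = {0}
  top : I n = Set.univ
  strict : ∀ i, i < n → I i ⊂ I (i + 1)
  simple : ∀ i (h : i < n),
    @IsSimple Γ (QuotPair (ideal i h.le) (ideal (i + 1) h)) _ _
      (quotPairAction (ideal i h.le) (ideal (i + 1) h))

/-- `Γ`-Noetherian: every ascending chain of `Γ`-order-ideals stabilizes. -/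
def GammaNoetherian (Γ : Type*) (T : Type*) [CommGroup Γ] [AddCommMonoid T]
    [DistribMulAction Γ T] : Prop :=
  ∀ A : ℕ → Set T, (∀ i, IsOrdIdeal Γ (A i)) → (∀ i, A i ⊆ A (i + 1)) →
    ∃ n, ∀ i, n ≤ i → A i = A n

/-- `Γ`-Artinian: every descending chain of `Γ`-order-ideals stabilizes. -/
def GammaArtinian (Γ : Type*) (T : Type*) [CommGroup Γ] [AddCommMonoid T]
    [DistribMulAction Γ T] : Prop :=
  ∀ A : ℕ → Set T, (∀ i, IsOrdIdeal Γ (A i)) → (∀ i, A (i + 1) ⊆ A i) →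
    ∃ n, ∀ i, n ≤ i → A i = A n

/-- Partial sums `I 0 + ⋯ + I (t-1)` of a family of subsets, as submonoids. -/
def sumSeq (I : ℕ → Set T) : ℕ → AddSubmonoid T
  | 0 => ⊥
  | t + 1 => sumSeq I t ⊔ AddSubmonoid.closure (I t)

section Aux

theorem IsOrdIdeal.mem_add_iff {X : Set T} (hX : IsOrdIdeal Γ X) (a b : T) :
    a + b ∈ X ↔ a ∈ X ∧ b ∈ X := by
  have := hX.2 1 1 a b; simpa using this

theorem IsOrdIdeal.inter {X Y : Set T} (hX : IsOrdIdeal Γ X) (hY : IsOrdIdeal Γ Y) :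
    IsOrdIdeal Γ (X ∩ Y) := by
  refine ⟨⟨hX.1, hY.1⟩, fun α β a b => ?_⟩
  constructor
  · rintro ⟨h1, h2⟩
    obtain ⟨a1, b1⟩ := (hX.2 α β a b).mp h1
    obtain ⟨a2, b2⟩ := (hY.2 α β a b).mp h2
    exact ⟨⟨a1, a2⟩, ⟨b1, b2⟩⟩
  · rintro ⟨⟨a1, a2⟩, ⟨b1, b2⟩⟩
    exact ⟨(hX.2 α β a b).mpr ⟨a1, b1⟩, (hY.2 α β a b).mpr ⟨a2, b2⟩⟩

/-- The sum of two subsets. -/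
def sumSet (X Y : Set T) : Set T := {z | ∃ a ∈ X, ∃ b ∈ Y, z = a + b}

theorem left_subset_sumSet {X Y : Set T} (hY : (0:T) ∈ Y) : X ⊆ sumSet X Y :=
  fun x hx => ⟨x, hx, 0, hY, (add_zero x).symm⟩

theorem right_subset_sumSet {X Y : Set T} (hX : (0:T) ∈ X) : Y ⊆ sumSet X Y :=
  fun y hy => ⟨0, hX, y, hy, (zero_add y).symm⟩

theorem sumSet_isOrdIdeal (hT : Refinement T) {X Y : Set T}
    (hX : IsOrdIdeal Γ X) (hY : IsOrdIdeal Γ Y) : IsOrdIdeal Γ (sumSet X Y) := by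
  refine ⟨⟨0, hX.1, 0, hY.1, (add_zero 0).symm⟩, fun α β a b => ?_⟩
  constructor
  · rintro ⟨x, hx, y, hy, e⟩
    obtain ⟨e₁, e₂, e₃, e₄, ea, eb, ex, ey⟩ := hT (α • a) (β • b) x y e
    rw [ex] at hx; rw [ey] at hy
    obtain ⟨h1, h3⟩ := (hX.mem_add_iff _ _).mp hx
    obtain ⟨h2, h4⟩ := (hY.mem_add_iff _ _).mp hy
    constructor
    · refine ⟨α⁻¹ • e₁, hX.smul_mem _ h1, α⁻¹ • e₂, hY.smul_mem _ h2, ?_⟩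
      have : a = α⁻¹ • (α • a) := by rw [smul_smul, inv_mul_cancel, one_smul]
      rw [this, ea, smul_add]
    · refine ⟨β⁻¹ • e₃, hX.smul_mem _ h3, β⁻¹ • e₄, hY.smul_mem _ h4, ?_⟩
      have : b = β⁻¹ • (β • b) := by rw [smul_smul, inv_mul_cancel, one_smul]
      rw [this, eb, smul_add]
  · rintro ⟨⟨x₁, hx₁, y₁, hy₁, ea⟩, ⟨x₂, hx₂, y₂, hy₂, eb⟩⟩
    refine ⟨α • x₁ + β • x₂, (hX.2 α β _ _).mpr ⟨hx₁, hx₂⟩,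
      α • y₁ + β • y₂, (hY.2 α β _ _).mpr ⟨hy₁, hy₂⟩, ?_⟩
    rw [ea, eb, smul_add, smul_add, add_add_add_comm]

section Sub

variable {J : Set T} (hJ : IsOrdIdeal Γ J)

theorem coeImg_isOrdIdeal {S : Set ↥hJ.asSubmonoid}
    (hS : @IsOrdIdeal Γ _ _ _ (subtypeAction hJ) S) :
    IsOrdIdeal Γ (Subtype.val '' S) := by
  letI := subtypeAction hJ
  constructor
  · exact ⟨0, hS.1, rfl⟩
  · intro α β a b
    constructor
    · rintro ⟨s, hs, es⟩
      have hmem : α • a + β • b ∈ J := by rw [← es]; exact s.2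
      obtain ⟨ha, hb⟩ := (hJ.2 α β a b).mp hmem
      have : s = α • (⟨a, ha⟩ : ↥hJ.asSubmonoid) + β • ⟨b, hb⟩ := Subtype.ext es
      rw [this] at hs
      obtain ⟨h1, h2⟩ := (hS.2 α β _ _).mp hs
      exact ⟨⟨_, h1, rfl⟩, ⟨_, h2, rfl⟩⟩
    · rintro ⟨⟨x, hx, ex⟩, ⟨y, hy, ey⟩⟩
      exact ⟨α • x + β • y, (hS.2 α β x y).mpr ⟨hx, hy⟩, by rw [← ex, ← ey]; rfl⟩

theorem restrict_coeImg (S : Set ↥hJ.asSubmonoid) :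
    restrictSet hJ (Subtype.val '' S) = S := by
  ext x; simp [restrictSet, Subtype.val_injective.mem_set_image]

theorem coeImg_restrict {G : Set T} (hG : G ⊆ J) :
    Subtype.val '' (restrictSet hJ G) = G := by
  ext x
  constructor
  · rintro ⟨y, hy, rfl⟩; exact hy
  · intro hx; exact ⟨⟨x, hG hx⟩, hx, rfl⟩

theorem coeImg_subset {S : Set ↥hJ.asSubmonoid} : Subtype.val '' S ⊆ J := by
  rintro x ⟨y, _, rfl⟩; exact y.2

theorem restrict_mono {G G' : Set T} (h : G ⊆ G') :
    restrictSet hJ G ⊆ restrictSet hJ G' := fun x hx => h hx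

theorem restrict_bot : restrictSet hJ ({0} : Set T) = {0} := by
  ext x; simp only [restrictSet, Set.mem_setOf_eq, Set.mem_singleton_iff]
  exact ⟨fun h => Subtype.ext h, fun h => by rw [h]; rfl⟩

theorem restrict_univ : restrictSet hJ (Set.univ : Set T) = Set.univ := by
  ext x; simp [restrictSet]

theorem coeImg_bot : Subtype.val '' (({0} : Set ↥hJ.asSubmonoid)) = ({0} : Set T) := by
  simp

theorem coeImg_univ : Subtype.val '' ((Set.univ : Set ↥hJ.asSubmonoid)) = J := by
  ext x
  constructor
  · rintro ⟨y, _, rfl⟩; exact y.2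
  · intro hx; exact ⟨⟨x, hx⟩, trivial, rfl⟩

end Sub

section Quot

variable {K : Set T} (hK : IsOrdIdeal Γ K)

/-- The quotient map `T → T/K`. -/
def qmk (hK : IsOrdIdeal Γ K) : T → QuotM hK.asSubmonoid := Quotient.mk''

theorem quot_zero : (0 : QuotM hK.asSubmonoid) = qmk hK 0 := rfl

theorem quot_add (x y : T) : qmk hK (x + y) = qmk hK x + qmk hK y := rfl

theorem quot_smul (α : Γ) (x : T) :
    @SMul.smul Γ (QuotM hK.asSubmonoid) (quotAction hK).toSMul α (qmk hK x) =
      qmk hK (α • x) := rfl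

theorem quot_eq_iff (x y : T) :
    qmk hK x = qmk hK y ↔ ∃ h₁ ∈ K, ∃ h₂ ∈ K, x + h₁ = y + h₂ := Quotient.eq''

theorem quot_eq_zero_iff (x : T) : qmk hK x = 0 ↔ x ∈ K := by
  rw [quot_zero, quot_eq_iff]
  constructor
  · rintro ⟨h₁, m₁, h₂, m₂, e⟩
    have : x + h₁ ∈ K := by rw [e, zero_add]; exact m₂
    exact ((hK.mem_add_iff x h₁).mp this).1
  · intro hx; exact ⟨0, hK.1, x, hx, by rw [add_zero, zero_add]⟩

theorem quot_surj (q : QuotM hK.asSubmonoid) : ∃ x : T, qmk hK x = q :=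
  Quotient.inductionOn' q fun x => ⟨x, rfl⟩

theorem quot_img_pre (E : Set (QuotM hK.asSubmonoid)) :
    qmk hK '' (qmk hK ⁻¹' E) = E := by
  apply Set.image_preimage_eq
  intro q; obtain ⟨x, hx⟩ := quot_surj hK q; exact ⟨x, hx⟩

theorem quot_pre_img {D : Set T} (hD : IsOrdIdeal Γ D) (hKD : K ⊆ D) :
    qmk hK ⁻¹' (qmk hK '' D) = D := by
  ext x
  constructor
  · rintro ⟨d, hd, hxd⟩
    obtain ⟨h₁, m₁, h₂, m₂, e⟩ := (quot_eq_iff hK d x).mp hxd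
    have : x + h₂ ∈ D := by rw [← e]; exact hD.add_mem hd (hKD m₁)
    exact ((hD.mem_add_iff x h₂).mp this).1
  · intro hx; exact ⟨x, hx, rfl⟩

theorem quot_pre_isOrdIdeal {E : Set (QuotM hK.asSubmonoid)}
    (hE : @IsOrdIdeal Γ _ _ _ (quotAction hK) E) :
    IsOrdIdeal Γ (qmk hK ⁻¹' E) := by
  letI := quotAction hK
  constructor
  · show qmk hK 0 ∈ E
    rw [← quot_zero hK]; exact hE.1
  · intro α β a b
    have h : qmk hK (α • a + β • b) = α • qmk hK a + β • qmk hK b := rfl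
    show qmk hK (α • a + β • b) ∈ E ↔ _
    rw [h, hE.2 α β]
    exact Iff.rfl

theorem quot_pre_mem_of_mem {E : Set (QuotM hK.asSubmonoid)}
    (hE : @IsOrdIdeal Γ _ _ _ (quotAction hK) E) :
    K ⊆ qmk hK ⁻¹' E := by
  intro x hx
  show qmk hK x ∈ E
  rw [(quot_eq_zero_iff hK x).mpr hx, quot_zero hK]
  show qmk hK 0 ∈ E
  rw [← quot_zero hK]
  exact hE.1

theorem quot_img_isOrdIdeal {D : Set T} (hD : IsOrdIdeal Γ D) (hKD : K ⊆ D) :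
    @IsOrdIdeal Γ (QuotM hK.asSubmonoid) _ _ (quotAction hK) (qmk hK '' D) := by
  letI := quotAction hK
  constructor
  · exact ⟨0, hD.1, rfl⟩
  · intro α β q r
    obtain ⟨x, rfl⟩ := quot_surj hK q
    obtain ⟨y, rfl⟩ := quot_surj hK r
    constructor
    · rintro ⟨d, hd, hde⟩
      have hde' : qmk hK d = qmk hK (α • x + β • y) := hde
      obtain ⟨h₁, m₁, h₂, m₂, e⟩ := (quot_eq_iff hK _ _).mp hde'
      have hsum : α • x + β • y + h₂ ∈ D := by
        rw [← e]; exact hD.add_mem hd (hKD m₁)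
      have h2 : α • x + (1:Γ) • (β • y + h₂) ∈ D := by
        rw [one_smul, ← add_assoc]; exact hsum
      obtain ⟨hx, hyh⟩ := (hD.2 α 1 _ _).mp h2
      have h3 : β • y + (1:Γ) • h₂ ∈ D := by rw [one_smul]; exact hyh
      obtain ⟨hy, -⟩ := (hD.2 β 1 _ _).mp h3
      exact ⟨⟨x, hx, rfl⟩, ⟨y, hy, rfl⟩⟩
    · rintro ⟨⟨a, ha, ea⟩, ⟨b, hb, eb⟩⟩
      refine ⟨α • a + β • b, (hD.2 α β a b).mpr ⟨ha, hb⟩, ?_⟩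
      show qmk hK (α • a + β • b) = _
      rw [quot_add hK, ← quot_smul hK, ← quot_smul hK]
      show (α • qmk hK a) + (β • qmk hK b) = _
      rw [ea, eb]

theorem quot_img_bot : qmk hK '' K = {0} := by
  ext q
  constructor
  · rintro ⟨x, hx, rfl⟩; exact (quot_eq_zero_iff hK x).mpr hx
  · rintro rfl; exact ⟨0, hK.1, (quot_zero hK).symm⟩

theorem quot_img_univ : qmk hK '' Set.univ = Set.univ := by
  rw [Set.image_univ]
  exact Set.range_eq_univ.mpr fun q => quot_surj hK q

end Quot

section Simple

theorem restrict_self {J : Set T} (hJ : IsOrdIdeal Γ J) :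
    restrictSet hJ J = Set.univ := by
  ext x; exact ⟨fun _ => trivial, fun _ => x.2⟩

/-- Abbreviation for simplicity of the quotient `Y/X`. -/
def SimpleQuot {X Y : Set T} (hX : IsOrdIdeal Γ X) (hY : IsOrdIdeal Γ Y) : Prop :=
  @IsSimple Γ (QuotPair hX hY) _ _ (quotPairAction hX hY)

theorem simpleQuot_congr {X X' Y Y' : Set T} {hX : IsOrdIdeal Γ X}
    {hX' : IsOrdIdeal Γ X'} {hY : IsOrdIdeal Γ Y} {hY' : IsOrdIdeal Γ Y'}
    (eX : X = X') (eY : Y = Y') (h : SimpleQuot hX hY) : SimpleQuot hX' hY' := by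
  subst eX; subst eY; exact h

theorem isSimple_quotM_iff {K : Set T} (hK : IsOrdIdeal Γ K) :
    @IsSimple Γ (QuotM hK.asSubmonoid) _ _ (quotAction hK) ↔
      ((∃ x : T, x ∉ K) ∧
       ∀ D : Set T, IsOrdIdeal Γ D → K ⊆ D → D = K ∨ D = Set.univ) := by
  letI := quotAction hK
  constructor
  · rintro ⟨⟨q, hq⟩, hsim⟩
    constructor
    · obtain ⟨x, rfl⟩ := quot_surj hK q
      exact ⟨x, fun hx => hq ((quot_eq_zero_iff hK x).mpr hx)⟩
    · intro D hD hKD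
      rcases hsim (qmk hK '' D) (quot_img_isOrdIdeal hK hD hKD) with h0 | hu
      · left
        refine Set.Subset.antisymm (fun x hx => ?_) hKD
        have hm : qmk hK x ∈ ({0} : Set (QuotM hK.asSubmonoid)) :=
          h0 ▸ Set.mem_image_of_mem _ hx
        exact (quot_eq_zero_iff hK x).mp hm
      · right
        have hp := quot_pre_img hK hD hKD
        rw [hu, Set.preimage_univ] at hp
        exact hp.symm
  · rintro ⟨⟨x, hx⟩, hmax⟩
    constructor
    · exact ⟨qmk hK x, fun h => hx ((quot_eq_zero_iff hK x).mp h)⟩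
    · intro E hE
      rcases hmax (qmk hK ⁻¹' E) (quot_pre_isOrdIdeal hK hE)
          (quot_pre_mem_of_mem hK hE) with h | h
      · left; rw [← quot_img_pre hK E, h, quot_img_bot]
      · right; rw [← quot_img_pre hK E, h, quot_img_univ]

theorem simpleQuot_iff {X Y : Set T} (hX : IsOrdIdeal Γ X) (hY : IsOrdIdeal Γ Y)
    (hXY : X ⊆ Y) :
    SimpleQuot hX hY ↔
      ((∃ y ∈ Y, y ∉ X) ∧
       ∀ D : Set T, IsOrdIdeal Γ D → X ⊆ D → D ⊆ Y → D = X ∨ D = Y) := by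
  letI := subtypeAction hY
  have base : SimpleQuot hX hY ↔
      ((∃ x : ↥hY.asSubmonoid, x ∉ restrictSet hY X) ∧
       ∀ D : Set ↥hY.asSubmonoid, IsOrdIdeal Γ D → restrictSet hY X ⊆ D →
         D = restrictSet hY X ∨ D = Set.univ) :=
    isSimple_quotM_iff (restrict_isOrdIdeal hX hY)
  rw [base]
  constructor
  · rintro ⟨⟨x, hx⟩, hmax⟩
    refine ⟨⟨↑x, x.2, hx⟩, ?_⟩
    intro D hD hXD hDY
    rcases hmax (restrictSet hY D) (restrict_isOrdIdeal hD hY)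
        (restrict_mono hY hXD) with h | h
    · left
      calc D = Subtype.val '' (restrictSet hY D) := (coeImg_restrict hY hDY).symm
        _ = Subtype.val '' (restrictSet hY X) := by rw [h]
        _ = X := coeImg_restrict hY hXY
    · right
      calc D = Subtype.val '' (restrictSet hY D) := (coeImg_restrict hY hDY).symm
        _ = Subtype.val '' Set.univ := by rw [h]
        _ = Y := coeImg_univ hY
  · rintro ⟨⟨y, hy, hyx⟩, hmax⟩
    refine ⟨⟨⟨y, hy⟩, hyx⟩, ?_⟩
    intro D hD hXD
    rcases hmax (Subtype.val '' D) (coeImg_isOrdIdeal hY hD)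
        (fun x hx => ⟨⟨x, hXY hx⟩, hXD hx, rfl⟩) (coeImg_subset hY) with h | h
    · left; rw [← restrict_coeImg hY D, h]
    · right; rw [← restrict_coeImg hY D, h, restrict_self hY]

end Simple

section Chain

theorem compSeries_of_chain :
    ∀ (n : ℕ) (A : ℕ → Set T) (hid : ∀ i, i ≤ n → IsOrdIdeal Γ (A i)),
    A 0 = {0} → A n = Set.univ → (∀ i, i < n → A i ⊆ A (i + 1)) →
    (∀ i (h : i < n), A i = A (i + 1) ∨ SimpleQuot (hid i h.le) (hid (i + 1) h)) →
    Nonempty (CompSeries Γ T) := by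
  intro n
  induction n with
  | zero =>
    intro A hid h0 hn _ _
    exact ⟨⟨0, A, hid, h0, hn, fun i hi => absurd hi (Nat.not_lt_zero i),
      fun i hi => absurd hi (Nat.not_lt_zero i)⟩⟩
  | succ n ih =>
    intro A hid h0 hn hsub hstep
    by_cases hc : ∀ i (h : i < n + 1), A i ≠ A (i + 1)
    · exact ⟨⟨n + 1, A, hid, h0, hn,
        fun i hi => (ssubset_iff_subset_ne).mpr ⟨hsub i hi, hc i hi⟩,
        fun i hi => (hstep i hi).resolve_left (hc i hi)⟩⟩
    · push_neg at hc
      obtain ⟨i, hi, he⟩ := hc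
      set A' : ℕ → Set T := fun j => if j < i then A j else A (j + 1) with hA'
      have eA' : ∀ j, (j < i → A' j = A j) ∧ (i ≤ j → A' j = A (j + 1)) := by
        intro j
        constructor
        · intro hj; simp only [hA', if_pos hj]
        · intro hj; simp only [hA', if_neg (Nat.not_lt.mpr hj)]
      have hid' : ∀ j, j ≤ n → IsOrdIdeal Γ (A' j) := by
        intro j hj
        by_cases hji : j < i
        · rw [(eA' j).1 hji]; exact hid j (by omega)
        · rw [(eA' j).2 (by omega)]; exact hid (j + 1) (by omega)
      refine ih A' hid' ?_ ?_ ?_ ?_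
      · by_cases h0i : 0 < i
        · rw [(eA' 0).1 h0i]; exact h0
        · have hi0 : i = 0 := by omega
          rw [(eA' 0).2 (by omega), ← hi0, ← he, hi0]; exact h0
      · rw [(eA' n).2 (by omega)]; exact hn
      · intro j hj
        by_cases h1 : j + 1 < i
        · rw [(eA' j).1 (by omega), (eA' (j + 1)).1 h1]; exact hsub j (by omega)
        · by_cases h2 : j < i
          · have hji : j + 1 = i := by omega
            subst hji
            rw [(eA' j).1 h2, (eA' (j + 1)).2 le_rfl, ← he]
            exact hsub j (by omega)
          · rw [(eA' j).2 (by omega), (eA' (j + 1)).2 (by omega)]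
            exact hsub (j + 1) (by omega)
      · intro j hj
        by_cases h1 : j + 1 < i
        · have e1 : A j = A' j := ((eA' j).1 (by omega)).symm
          have e2 : A (j + 1) = A' (j + 1) := ((eA' (j + 1)).1 h1).symm
          rcases hstep j (by omega) with heq | hs
          · left; rw [← e1, ← e2]; exact heq
          · right; exact simpleQuot_congr e1 e2 hs
        · by_cases h2 : j < i
          · have hji : j + 1 = i := by omega
            subst hji
            have e1 : A j = A' j := ((eA' j).1 h2).symm
            have e2 : A (j + 1) = A' (j + 1) := by
              rw [(eA' (j + 1)).2 le_rfl, ← he]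
            rcases hstep j (by omega) with heq | hs
            · left; rw [← e1, ← e2]; exact heq
            · right; exact simpleQuot_congr e1 e2 hs
          · have e1 : A (j + 1) = A' j := ((eA' j).2 (by omega)).symm
            have e2 : A (j + 2) = A' (j + 1) := ((eA' (j + 1)).2 (by omega)).symm
            rcases hstep (j + 1) (by omega) with heq | hs
            · left; rw [← e1, ← e2]; exact heq
            · right; exact simpleQuot_congr e1 e2 hs

end Chain

end Aux

end JH

open JH in
/-- `T` has a Γ-composition series iff both `I` and `T/I` do. -/
theorem stmt18 {Γ T : Type*} [CommGroup Γ] [AddCommMonoid T] [DistribMulAction Γ T]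
    (hT : Refinement T) {I : Set T} (hI : IsOrdIdeal Γ I) :
    Nonempty (CompSeries Γ T) ↔
      (Nonempty (@CompSeries Γ ↥hI.asSubmonoid _ _ (subtypeAction hI)) ∧
       Nonempty (@CompSeries Γ (QuotM hI.asSubmonoid) _ _ (quotAction hI))) := by
  constructor
  · rintro ⟨S⟩
    constructor
    · -- series for the ideal I
      letI := subtypeAction hI
      refine compSeries_of_chain S.n (fun i => restrictSet hI (S.I i))
        (fun i hi => restrict_isOrdIdeal (S.ideal i hi) hI) ?_ ?_ ?_ ?_
      · show restrictSet hI (S.I 0) = {0}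
        rw [S.bot]; exact restrict_bot hI
      · show restrictSet hI (S.I S.n) = Set.univ
        rw [S.top]; exact restrict_univ hI
      · exact fun i hi => restrict_mono hI (S.strict i hi).subset
      · intro i h
        by_cases heq : restrictSet hI (S.I i) = restrictSet hI (S.I (i + 1))
        · exact Or.inl heq
        · right
          have hsubII : restrictSet hI (S.I i) ⊆ restrictSet hI (S.I (i + 1)) :=
            restrict_mono hI (S.strict i h).subset
          have hmax := ((simpleQuot_iff (S.ideal i h.le) (S.ideal (i + 1) h)
            (S.strict i h).subset).mp (S.simple i h)).2
          refine (simpleQuot_iff _ _ hsubII).mpr ⟨?_, ?_⟩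
          · obtain ⟨y, hy1, hy2⟩ :=
              Set.exists_of_ssubset (ssubset_iff_subset_ne.mpr ⟨hsubII, heq⟩)
            exact ⟨y, hy1, hy2⟩
          · intro D hD hXD hDY
            have hDsub : Subtype.val '' D ⊆ S.I (i + 1) := by
              rintro x ⟨d, hd, rfl⟩; exact hDY hd
            have hGid : IsOrdIdeal Γ (sumSet (Subtype.val '' D) (S.I i)) :=
              sumSet_isOrdIdeal hT (coeImg_isOrdIdeal hI hD) (S.ideal i h.le)
            have hIG : S.I i ⊆ sumSet (Subtype.val '' D) (S.I i) :=
              right_subset_sumSet ⟨0, hD.1, rfl⟩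
            have hGsub : sumSet (Subtype.val '' D) (S.I i) ⊆ S.I (i + 1) := by
              rintro z ⟨a, ha, b, hb, rfl⟩
              exact (S.ideal (i + 1) h).add_mem (hDsub ha) ((S.strict i h).subset hb)
            rcases hmax _ hGid hIG hGsub with hGeq | hGeq
            · left
              apply Set.Subset.antisymm _ hXD
              intro d hd
              have hmem : (↑d : T) ∈ sumSet (Subtype.val '' D) (S.I i) :=
                left_subset_sumSet (S.ideal i h.le).1 ⟨d, hd, rfl⟩
              rw [hGeq] at hmem
              exact hmem
            · right
              apply Set.Subset.antisymm hDY
              rintro x hx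
              have hxG : (↑x : T) ∈ sumSet (Subtype.val '' D) (S.I i) := by
                rw [hGeq]; exact hx
              obtain ⟨a, ha, b, hb, hab⟩ := hxG
              obtain ⟨d, hd, rfl⟩ := ha
              have hbI : b ∈ I := ((hI.mem_add_iff _ _).mp (hab ▸ x.2)).2
              have hbD : (⟨b, hbI⟩ : ↥hI.asSubmonoid) ∈ D := hXD hb
              have hx' : x = d + ⟨b, hbI⟩ := Subtype.ext hab
              rw [hx']
              exact hD.add_mem hd hbD
    · -- series for the quotient T/I
      letI := quotAction hI
      have hCid : ∀ j, j ≤ S.n → IsOrdIdeal Γ (sumSet (S.I j) I) :=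
        fun j hj => sumSet_isOrdIdeal hT (S.ideal j hj) hI
      have hIC : ∀ j, j ≤ S.n → I ⊆ sumSet (S.I j) I :=
        fun j hj => right_subset_sumSet (S.ideal j hj).1
      have hCmono : ∀ j, j < S.n → sumSet (S.I j) I ⊆ sumSet (S.I (j + 1)) I := by
        rintro j hj z ⟨a, ha, b, hb, rfl⟩
        exact ⟨a, (S.strict j hj).subset ha, b, hb, rfl⟩
      refine compSeries_of_chain S.n (fun j => qmk hI '' (sumSet (S.I j) I))
        (fun j hj => quot_img_isOrdIdeal hI (hCid j hj) (hIC j hj)) ?_ ?_ ?_ ?_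
      · show qmk hI '' (sumSet (S.I 0) I) = {0}
        have hC0 : sumSet (S.I 0) I = I := by
          ext z
          constructor
          · rintro ⟨a, ha, b, hb, rfl⟩
            rw [S.bot] at ha
            rw [Set.mem_singleton_iff] at ha
            rw [ha, zero_add]
            exact hb
          · intro hz
            exact ⟨0, by rw [S.bot]; rfl, z, hz, (zero_add z).symm⟩
        rw [hC0, quot_img_bot hI]
      · show qmk hI '' (sumSet (S.I S.n) I) = Set.univ
        have hCn : sumSet (S.I S.n) I = Set.univ := by
          apply Set.eq_univ_of_univ_subset
          intro x _
          exact ⟨x, by rw [S.top]; trivial, 0, hI.1, (add_zero x).symm⟩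
        rw [hCn, quot_img_univ hI]
      · exact fun j hj => Set.image_mono (hCmono j hj)
      · intro j h
        by_cases heq : qmk hI '' (sumSet (S.I j) I) = qmk hI '' (sumSet (S.I (j + 1)) I)
        · exact Or.inl heq
        · right
          have hBsub : qmk hI '' (sumSet (S.I j) I) ⊆ qmk hI '' (sumSet (S.I (j + 1)) I) :=
            Set.image_mono (hCmono j h)
          have hmax := ((simpleQuot_iff (S.ideal j h.le) (S.ideal (j + 1) h)
            (S.strict j h).subset).mp (S.simple j h)).2
          refine (simpleQuot_iff _ _ hBsub).mpr ⟨?_, ?_⟩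
          · obtain ⟨q, hq1, hq2⟩ :=
              Set.exists_of_ssubset (ssubset_iff_subset_ne.mpr ⟨hBsub, heq⟩)
            exact ⟨q, hq1, hq2⟩
          · intro E hE hBjE hEBj1
            have hD := quot_pre_isOrdIdeal hI hE
            have hCjD : sumSet (S.I j) I ⊆ qmk hI ⁻¹' E := by
              rw [← quot_pre_img hI (hCid j h.le) (hIC j h.le)]
              exact Set.preimage_mono hBjE
            have hDCj1 : qmk hI ⁻¹' E ⊆ sumSet (S.I (j + 1)) I := by
              rw [← quot_pre_img hI (hCid (j + 1) h) (hIC (j + 1) h)]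
              exact Set.preimage_mono hEBj1
            have hD'id : IsOrdIdeal Γ ((qmk hI ⁻¹' E) ∩ S.I (j + 1)) :=
              hD.inter (S.ideal (j + 1) h)
            have h1 : S.I j ⊆ (qmk hI ⁻¹' E) ∩ S.I (j + 1) := fun x hx =>
              ⟨hCjD (left_subset_sumSet hI.1 hx), (S.strict j h).subset hx⟩
            rcases hmax _ hD'id h1 Set.inter_subset_right with hq | hq
            · left
              have hDeq : qmk hI ⁻¹' E = sumSet (S.I j) I := by
                apply Set.Subset.antisymm _ hCjD
                intro x hxD
                obtain ⟨a, ha, b, hb, hab⟩ := hDCj1 hxD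
                rw [hab] at hxD ⊢
                have hbD : b ∈ qmk hI ⁻¹' E := quot_pre_mem_of_mem hI hE hb
                have haD : a ∈ qmk hI ⁻¹' E := ((hD.mem_add_iff a b).mp hxD).1
                exact ⟨a, hq ▸ ⟨haD, ha⟩, b, hb, rfl⟩
              rw [← quot_img_pre hI E, hDeq]
            · right
              have hDeq : qmk hI ⁻¹' E = sumSet (S.I (j + 1)) I := by
                apply Set.Subset.antisymm hDCj1
                rintro z ⟨a, ha, b, hb, rfl⟩
                have haD : a ∈ qmk hI ⁻¹' E := by rw [← hq] at ha; exact ha.1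
                exact hD.add_mem haD (quot_pre_mem_of_mem hI hE hb)
              rw [← quot_img_pre hI E, hDeq]
  · -- converse
    rintro ⟨⟨SB⟩, ⟨SC⟩⟩
    letI := subtypeAction hI
    letI := quotAction hI
    set m := SB.n with hm
    set p := SC.n with hp
    set F : ℕ → Set T := fun k =>
      if k ≤ m then Subtype.val '' (SB.I k) else qmk hI ⁻¹' (SC.I (k - m)) with hF
    have eF1 : ∀ k, k ≤ m → F k = Subtype.val '' (SB.I k) := by
      intro k hk; simp only [hF, if_pos hk]
    have eF2 : ∀ k, m < k → F k = qmk hI ⁻¹' (SC.I (k - m)) := by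
      intro k hk; simp only [hF, if_neg (Nat.not_le.mpr hk)]
    have pre_bot : qmk hI ⁻¹' (({0} : Set (QuotM hI.asSubmonoid))) = I := by
      ext x
      simp only [Set.mem_preimage, Set.mem_singleton_iff]
      exact quot_eq_zero_iff hI x
    have hFmid : Subtype.val '' (SB.I m) = qmk hI ⁻¹' (SC.I 0) := by
      rw [SB.top, coeImg_univ hI, SC.bot, pre_bot]
    have eF2' : ∀ k, m ≤ k → F k = qmk hI ⁻¹' (SC.I (k - m)) := by
      intro k hk
      rcases Nat.eq_or_lt_of_le hk with heq | hlt
      · rw [← heq, eF1 m le_rfl, Nat.sub_self, hFmid]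
      · exact eF2 k hlt
    have hidF : ∀ k, k ≤ m + p → IsOrdIdeal Γ (F k) := by
      intro k hk
      by_cases hkm : k ≤ m
      · rw [eF1 k hkm]; exact coeImg_isOrdIdeal hI (SB.ideal k hkm)
      · rw [eF2 k (by omega)]
        exact quot_pre_isOrdIdeal hI (SC.ideal (k - m) (by omega))
    refine compSeries_of_chain (m + p) F hidF ?_ ?_ ?_ ?_
    · rw [eF1 0 (Nat.zero_le m), SB.bot]
      simp
    · by_cases hp0 : p = 0
      · have h01 : (({0} : Set (QuotM hI.asSubmonoid))) = Set.univ := by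
          have hb := SC.bot
          have ht := SC.top
          rw [← hp, hp0] at ht
          rw [← hb]; exact ht
        rw [hp0, add_zero, eF1 m le_rfl, SB.top, coeImg_univ hI]
        rw [← pre_bot, h01]
        simp
      · rw [eF2 (m + p) (by omega)]
        have : m + p - m = p := by omega
        rw [this, SC.top]
        simp
    · intro k hk
      by_cases h1 : k + 1 ≤ m
      · rw [eF1 k (by omega), eF1 (k + 1) h1]
        exact Set.image_mono (SB.strict k (by omega)).subset
      · by_cases h2 : k ≤ m
        · have hkm : k = m := by omega
          have hp0 : 0 < p := by omega
          subst hkm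
          rw [eF1 m le_rfl, hFmid, eF2 (m + 1) (by omega)]
          have e1 : m + 1 - m = 1 := by omega
          rw [e1]
          exact Set.preimage_mono (SC.strict 0 hp0).subset
        · rw [eF2 k (by omega), eF2 (k + 1) (by omega)]
          have e : k + 1 - m = (k - m) + 1 := by omega
          rw [e]
          exact Set.preimage_mono (SC.strict (k - m) (by omega)).subset
    · intro k hk
      right
      by_cases h1 : k + 1 ≤ m
      · have hkm : k < m := by omega
        obtain ⟨⟨y, hy1, hy2⟩, hmaxB⟩ := (simpleQuot_iff (SB.ideal k hkm.le)
          (SB.ideal (k + 1) hkm) (SB.strict k hkm).subset).mp (SB.simple k hkm)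
        have hS : SimpleQuot (coeImg_isOrdIdeal hI (SB.ideal k hkm.le))
            (coeImg_isOrdIdeal hI (SB.ideal (k + 1) hkm)) := by
          refine (simpleQuot_iff _ _
            (Set.image_mono (SB.strict k hkm).subset)).mpr ⟨?_, ?_⟩
          · refine ⟨↑y, ⟨y, hy1, rfl⟩, ?_⟩
            rintro ⟨y', hy', hyy⟩
            exact hy2 (by rwa [Subtype.val_injective hyy] at hy')
          · intro G hG hsub1 hsub2
            have hGI : G ⊆ I := hsub2.trans (coeImg_subset hI)
            have hr1 : SB.I k ⊆ restrictSet hI G := fun x hx => hsub1 ⟨x, hx, rfl⟩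
            have hr2 : restrictSet hI G ⊆ SB.I (k + 1) := by
              intro x hx
              obtain ⟨y', hy', e⟩ := hsub2 hx
              rwa [← Subtype.val_injective e]
            rcases hmaxB (restrictSet hI G) (restrict_isOrdIdeal hG hI) hr1 hr2
              with hg | hg
            · left; rw [← coeImg_restrict hI hGI, hg]
            · right; rw [← coeImg_restrict hI hGI, hg]
        exact simpleQuot_congr (eF1 k (by omega)).symm (eF1 (k + 1) h1).symm hS
      · have hj : k - m < p := by omega
        obtain ⟨⟨q, hq1, hq2⟩, hmaxC⟩ := (simpleQuot_iff (SC.ideal (k - m) hj.le)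
          (SC.ideal (k - m + 1) hj) (SC.strict (k - m) hj).subset).mp
          (SC.simple (k - m) hj)
        have hS : SimpleQuot (quot_pre_isOrdIdeal hI (SC.ideal (k - m) hj.le))
            (quot_pre_isOrdIdeal hI (SC.ideal (k - m + 1) hj)) := by
          refine (simpleQuot_iff _ _
            (Set.preimage_mono (SC.strict (k - m) hj).subset)).mpr ⟨?_, ?_⟩
          · obtain ⟨x, rfl⟩ := quot_surj hI q
            exact ⟨x, hq1, hq2⟩
          · intro G hG hsub1 hsub2
            have hIG : I ⊆ G :=
              (quot_pre_mem_of_mem hI (SC.ideal (k - m) hj.le)).trans hsub1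
            have hi1 : SC.I (k - m) ⊆ qmk hI '' G := by
              rw [← quot_img_pre hI (SC.I (k - m))]
              exact Set.image_mono hsub1
            have hi2 : qmk hI '' G ⊆ SC.I (k - m + 1) := by
              rw [← quot_img_pre hI (SC.I (k - m + 1))]
              exact Set.image_mono hsub2
            rcases hmaxC (qmk hI '' G) (quot_img_isOrdIdeal hI hG hIG) hi1 hi2
              with hg | hg
            · left; rw [← quot_pre_img hI hG hIG, hg]
            · right; rw [← quot_pre_img hI hG hIG, hg]
        have e2 : k + 1 - m = (k - m) + 1 := by omega
        refine simpleQuot_congr (eF2' k (by omega)).symm ?_ hS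
        rw [eF2 (k + 1) (by omega), e2]
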